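/- The affine cubic surface in ℂ³ defined by x₁x₂x₃ + x₁² + x₂² + s₀x₁ + s₁x₂ + 1 = 0, for fixed parameters s₀, s₁ ∈ ℂ, is singular at some point if and only if s₀ = ±2 or s₁ = ±2. Moreover if s₀ = ε₀·2 and s₁ ≠ ±2 (ε₀ ∈ {±1}) there is exactly one singular point, and if both s₀ = ±2 and s₁ = ±2 there are exactly two singular points, all of type A₁. -/

import Mathlib

open MvPolynomial

/-- The family of cubic surfaces `x₁x₂x₃ + x₁² + x₂² + s₀x₁ + s₁x₂ + 1 = 0`
(monodromy spaces for degenerate Painlevé V). -/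
noncomputable def cubicPVdeg (s₀ s₁ : ℂ) : MvPolynomial (Fin 3) ℂ :=
  X 0 * X 1 * X 2 + X 0 ^ 2 + X 1 ^ 2 + C s₀ * X 0 + C s₁ * X 1 + 1

/-- A singular point of an affine surface `F = 0` in `ℂ³`: a common zero of `F`
and its three partial derivatives. -/
def SingPt (F : MvPolynomial (Fin 3) ℂ) (p : Fin 3 → ℂ) : Prop :=
  eval p F = 0 ∧ ∀ i : Fin 3, eval p (pderiv i F) = 0

/-- Type `A₁` (ordinary double point): the Hessian at the point is nondegenerate. -/
def IsA1 (F : MvPolynomial (Fin 3) ℂ) (p : Fin 3 → ℂ) : Prop :=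
  (Matrix.of fun i j : Fin 3 => eval p (pderiv i (pderiv j F))).det ≠ 0

theorem singPt_iff (s₀ s₁ : ℂ) (p : Fin 3 → ℂ) :
    SingPt (cubicPVdeg s₀ s₁) p ↔
    (p 0 * p 1 * p 2 + p 0 ^ 2 + p 1 ^ 2 + s₀ * p 0 + s₁ * p 1 + 1 = 0 ∧
     p 1 * p 2 + 2 * p 0 + s₀ = 0 ∧
     p 0 * p 2 + 2 * p 1 + s₁ = 0 ∧
     p 0 * p 1 = 0) := by
  have h3 : ∀ P : Fin 3 → Prop, (∀ i, P i) ↔ P 0 ∧ P 1 ∧ P 2 := by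
    intro P
    constructor
    · intro h; exact ⟨h 0, h 1, h 2⟩
    · rintro ⟨h0, h1, h2⟩ i; fin_cases i <;> assumption
  rw [SingPt, h3]
  simp only [cubicPVdeg, map_add, map_mul, map_pow, map_one, eval_X, eval_C,
    Derivation.leibniz, pderiv_X, pderiv_C, Derivation.leibniz_pow, map_one,
    smul_eq_mul, Pi.single_apply]
  norm_num [Fin.ext_iff, mul_eq_zero]
  intro _
  constructor <;> rintro ⟨a, b, c⟩ <;>
    exact ⟨by linear_combination a, by linear_combination b, c⟩

theorem isA1_of_sing (s₀ s₁ : ℂ) (p : Fin 3 → ℂ) (h : SingPt (cubicPVdeg s₀ s₁) p) :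
    IsA1 (cubicPVdeg s₀ s₁) p := by
  obtain ⟨e1, e2, e3, e4⟩ := (singPt_iff s₀ s₁ p).1 h
  rw [IsA1]
  have hcube : cubicPVdeg s₀ s₁ =
      X 0 * X 1 * X 2 + X 0 * X 0 + X 1 * X 1 + C s₀ * X 0 + C s₁ * X 1 + 1 := by
    rw [cubicPVdeg]; ring
  have hdet : (Matrix.of fun i j : Fin 3 => eval p (pderiv i (pderiv j (cubicPVdeg s₀ s₁)))).det
      = 2 * (p 0 * p 1 * p 2) - 2 * p 0 ^ 2 - 2 * p 1 ^ 2 := by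
    rw [Matrix.det_fin_three]
    simp only [hcube, Matrix.of_apply, map_add, map_mul, map_one, eval_X, eval_C,
      Derivation.leibniz, pderiv_X, pderiv_C,
      smul_eq_mul, Pi.single_apply]
    norm_num [Fin.ext_iff]
    ring
  rw [hdet]
  rcases mul_eq_zero.1 e4 with h0 | h1
  · have hsq : p 1 ^ 2 = 1 := by
      linear_combination p 1 * e3 - e1 + (p 0 + s₀ + p 1 * p 2) * h0 - p 2 * e4
    have hv : 2 * (p 0 * p 1 * p 2) - 2 * p 0 ^ 2 - 2 * p 1 ^ 2 = -2 := by
      linear_combination (2 * p 1 * p 2 - 2 * p 0) * h0 - 2 * hsq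
    rw [hv]; norm_num
  · have hsq : p 0 ^ 2 = 1 := by
      linear_combination p 0 * e2 - e1 + (p 1 + s₁ + p 0 * p 2) * h1 - p 2 * e4
    have hv : 2 * (p 0 * p 1 * p 2) - 2 * p 0 ^ 2 - 2 * p 1 ^ 2 = -2 := by
      linear_combination (2 * p 0 * p 2 - 2 * p 1) * h1 - 2 * hsq
    rw [hv]; norm_num

theorem sing_pt0 (s₀ s₁ ε : ℂ) (hε : ε * ε = 1) (hs : s₀ = 2 * ε) :
    SingPt (cubicPVdeg s₀ s₁) ![-ε, 0, ε * s₁] := by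
  subst hs
  rw [singPt_iff]
  norm_num [Matrix.cons_val_zero, Matrix.cons_val_one, Matrix.cons_val_two]
  exact ⟨by linear_combination -hε, by linear_combination -s₁ * hε⟩

theorem sing_pt1 (s₀ s₁ ε : ℂ) (hε : ε * ε = 1) (hs : s₁ = 2 * ε) :
    SingPt (cubicPVdeg s₀ s₁) ![0, -ε, ε * s₀] := by
  subst hs
  rw [singPt_iff]
  norm_num [Matrix.cons_val_zero, Matrix.cons_val_one, Matrix.cons_val_two]
  exact ⟨by linear_combination -hε, by linear_combination -s₀ * hε⟩

theorem sing_classify0 (s₀ s₁ ε : ℂ) (hε : ε * ε = 1) (hs : s₀ = 2 * ε) (p : Fin 3 → ℂ)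
    (h : SingPt (cubicPVdeg s₀ s₁) p) :
    (p 1 = 0 ∧ p = ![-ε, 0, ε * s₁]) ∨ (p 0 = 0 ∧ s₁ = 2 * (-p 1) ∧ p 1 * p 1 = 1) := by
  subst hs
  obtain ⟨e1, e2, e3, e4⟩ := (singPt_iff _ _ p).1 h
  rcases mul_eq_zero.1 e4 with h0 | h1
  · right
    refine ⟨h0, by linear_combination e3 - p 2 * h0, ?_⟩
    linear_combination p 1 * e3 - e1 + (p 0 + 2 * ε + p 1 * p 2) * h0 - p 2 * e4
  · left
    refine ⟨h1, ?_⟩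
    have hp0 : p 0 = -ε := by linear_combination (e2 - p 2 * h1) / 2
    have hp2 : p 2 = ε * s₁ := by
      have key : -ε * p 2 + s₁ = 0 := by linear_combination e3 - 2 * h1 - p 2 * hp0
      linear_combination -ε * key - p 2 * hε
    funext i
    fin_cases i <;> simp [hp0, h1, hp2]

theorem sing_classify1 (s₀ s₁ ε : ℂ) (hε : ε * ε = 1) (hs : s₁ = 2 * ε) (p : Fin 3 → ℂ)
    (h : SingPt (cubicPVdeg s₀ s₁) p) :
    (p 0 = 0 ∧ p = ![0, -ε, ε * s₀]) ∨ (p 1 = 0 ∧ s₀ = 2 * (-p 0) ∧ p 0 * p 0 = 1) := by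
  subst hs
  obtain ⟨e1, e2, e3, e4⟩ := (singPt_iff _ _ p).1 h
  rcases mul_eq_zero.1 e4 with h0 | h1
  · left
    refine ⟨h0, ?_⟩
    have hp1 : p 1 = -ε := by linear_combination (e3 - p 2 * h0) / 2
    have hp2 : p 2 = ε * s₀ := by
      have key : -ε * p 2 + s₀ = 0 := by linear_combination e2 - 2 * h0 - p 2 * hp1
      linear_combination -ε * key - p 2 * hε
    funext i
    fin_cases i <;> simp [hp1, h0, hp2]
  · right
    refine ⟨h1, by linear_combination e2 - p 2 * h1, ?_⟩
    linear_combination p 0 * e2 - e1 + (p 1 + 2 * ε + p 0 * p 2) * h1 - p 2 * e4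

theorem sign_of (s : ℂ) (h : s = 2 ∨ s = -2) : ∃ ε : ℂ, ε * ε = 1 ∧ s = 2 * ε := by
  rcases h with h | h
  · exact ⟨1, by norm_num, by rw [h]; ring⟩
  · exact ⟨-1, by norm_num, by rw [h]; ring⟩

theorem not_pm2 (s a : ℂ) (h2 : s ≠ 2) (hm2 : s ≠ -2) (ha : a * a = 1) (hs : s = 2 * (-a)) :
    False := by
  have : (a - 1) * (a + 1) = 0 := by linear_combination ha
  rcases mul_eq_zero.1 this with h | h
  · exact hm2 (by rw [hs, show a = 1 by linear_combination h]; ring)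
  · exact h2 (by rw [hs, show a = -1 by linear_combination h]; ring)

/-- The cubic surface `x₁x₂x₃ + x₁² + x₂² + s₀x₁ + s₁x₂ + 1 = 0` is singular iff
`s₀ = ±2` or `s₁ = ±2`; if `s₀ = ±2` and `s₁ ≠ ±2` there is exactly one singular
point; if `s₀ = ±2` and `s₁ = ±2` there are exactly two singular points; and all
singular points are of type `A₁`. -/
theorem stmt_3 (s₀ s₁ : ℂ) :
    ((∃ p, SingPt (cubicPVdeg s₀ s₁) p) ↔ (s₀ = 2 ∨ s₀ = -2 ∨ s₁ = 2 ∨ s₁ = -2)) ∧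
    ((s₀ = 2 ∨ s₀ = -2) → s₁ ≠ 2 → s₁ ≠ -2 →
      (∃! p, SingPt (cubicPVdeg s₀ s₁) p) ∧
      ∀ p, SingPt (cubicPVdeg s₀ s₁) p → IsA1 (cubicPVdeg s₀ s₁) p) ∧
    ((s₀ = 2 ∨ s₀ = -2) → (s₁ = 2 ∨ s₁ = -2) →
      (∃ p q, p ≠ q ∧ SingPt (cubicPVdeg s₀ s₁) p ∧ SingPt (cubicPVdeg s₀ s₁) q ∧
        ∀ r, SingPt (cubicPVdeg s₀ s₁) r → r = p ∨ r = q) ∧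
      ∀ p, SingPt (cubicPVdeg s₀ s₁) p → IsA1 (cubicPVdeg s₀ s₁) p) := by
  refine ⟨⟨?_, ?_⟩, ?_, ?_⟩
  · -- singular → parameters special
    rintro ⟨p, hp⟩
    obtain ⟨e1, e2, e3, e4⟩ := (singPt_iff _ _ p).1 hp
    rcases mul_eq_zero.1 e4 with h0 | h1
    · have hsq : (p 1 - 1) * (p 1 + 1) = 0 := by
        linear_combination p 1 * e3 - e1 + (p 0 + s₀ + p 1 * p 2) * h0 - p 2 * e4
      have hs : s₁ = 2 * (-p 1) := by linear_combination e3 - p 2 * h0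
      rcases mul_eq_zero.1 hsq with h | h
      · exact Or.inr (Or.inr (Or.inr (by rw [hs, show p 1 = 1 by linear_combination h]; ring)))
      · exact Or.inr (Or.inr (Or.inl (by rw [hs, show p 1 = -1 by linear_combination h]; ring)))
    · have hsq : (p 0 - 1) * (p 0 + 1) = 0 := by
        linear_combination p 0 * e2 - e1 + (p 1 + s₁ + p 0 * p 2) * h1 - p 2 * e4
      have hs : s₀ = 2 * (-p 0) := by linear_combination e2 - p 2 * h1
      rcases mul_eq_zero.1 hsq with h | h
      · exact Or.inr (Or.inl (by rw [hs, show p 0 = 1 by linear_combination h]; ring))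
      · exact Or.inl (by rw [hs, show p 0 = -1 by linear_combination h]; ring)
  · -- parameters special → singular
    rintro (h | h | h | h)
    · exact ⟨_, sing_pt0 s₀ s₁ 1 (by norm_num) (by rw [h]; ring)⟩
    · exact ⟨_, sing_pt0 s₀ s₁ (-1) (by norm_num) (by rw [h]; ring)⟩
    · exact ⟨_, sing_pt1 s₀ s₁ 1 (by norm_num) (by rw [h]; ring)⟩
    · exact ⟨_, sing_pt1 s₀ s₁ (-1) (by norm_num) (by rw [h]; ring)⟩
  · -- one singular point
    intro h0 h2 hm2
    obtain ⟨ε, hε, hs⟩ := sign_of s₀ h0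
    refine ⟨⟨![-ε, 0, ε * s₁], sing_pt0 s₀ s₁ ε hε hs, ?_⟩, fun p hp => isA1_of_sing _ _ p hp⟩
    intro q hq
    rcases sing_classify0 s₀ s₁ ε hε hs q hq with ⟨-, h⟩ | ⟨-, ha, hb⟩
    · exact h
    · exact absurd (not_pm2 s₁ (q 1) h2 hm2 hb ha) not_false
  · -- two singular points
    intro h0 h1
    obtain ⟨ε₀, hε₀, hs₀⟩ := sign_of s₀ h0
    obtain ⟨ε₁, hε₁, hs₁⟩ := sign_of s₁ h1
    refine ⟨⟨![-ε₀, 0, ε₀ * s₁], ![0, -ε₁, ε₁ * s₀], ?_,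
      sing_pt0 s₀ s₁ ε₀ hε₀ hs₀, sing_pt1 s₀ s₁ ε₁ hε₁ hs₁, ?_⟩,
      fun p hp => isA1_of_sing _ _ p hp⟩
    · intro hpq
      have h := congrFun hpq 0
      simp at h
      rw [h] at hε₀
      simp at hε₀
    · intro r hr
      rcases sing_classify0 s₀ s₁ ε₀ hε₀ hs₀ r hr with ⟨-, h⟩ | ⟨ha, -, -⟩
      · exact Or.inl h
      · rcases sing_classify1 s₀ s₁ ε₁ hε₁ hs₁ r hr with ⟨-, h⟩ | ⟨-, -, hb⟩
        · exact Or.inr h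
        · rw [ha] at hb
          simp at hb
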